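/- Let z₁, z₂, z₃, z₄ ∈ ℂ with ∑|zᵢ|² = 1, let v be the 4×2 matrix with rows (z₁,z₂), (-z̄₂,z̄₁), (z₃,z₄), (-z̄₄,z̄₃), and set p = v v*. Then p equals (1/2) times the 4×4 matrix with rows (1+x, 0, α, β), (0, 1+x, -β̄, ᾱ), (ᾱ, -β, 1-x, 0), (β̄, α, 0, 1-x), where x = |z₁|²+|z₂|²-|z₃|²-|z₄|², α = 2(z₁z̄₃ + z₂z̄₄), β = 2(-z₁z₄ + z₂z₃). -/
import Mathlib


open Matrix

/-- Explicit form of the classical charge `-1` instanton projector `p = v v*`. -/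
theorem stmt10 (z₁ z₂ z₃ z₄ : ℂ)
    (h : ‖z₁‖ ^ 2 + ‖z₂‖ ^ 2 + ‖z₃‖ ^ 2 + ‖z₄‖ ^ 2 = 1)
    (v : Matrix (Fin 4) (Fin 2) ℂ)
    (hv : v = !![z₁, z₂; -star z₂, star z₁; z₃, z₄; -star z₄, star z₃])
    (x : ℂ) (hx : x = ((‖z₁‖ ^ 2 + ‖z₂‖ ^ 2 - ‖z₃‖ ^ 2 - ‖z₄‖ ^ 2 : ℝ) : ℂ))
    (α β : ℂ) (hα : α = 2 * (z₁ * star z₃ + z₂ * star z₄))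
    (hβ : β = 2 * (-z₁ * z₄ + z₂ * z₃)) :
    v * vᴴ = (1 / 2 : ℂ) •
      !![1 + x, 0, α, β;
         0, 1 + x, -star β, star α;
         star α, -β, 1 - x, 0;
         star β, α, 0, 1 - x] := by
  have h' : z₁ * (starRingEnd ℂ) z₁ + z₂ * (starRingEnd ℂ) z₂ + z₃ * (starRingEnd ℂ) z₃ + z₄ * (starRingEnd ℂ) z₄ = 1 := by
    have := congrArg (Complex.ofReal) h
    push_cast at this
    simpa [Complex.mul_conj'] using this
  have hx' : x = z₁ * (starRingEnd ℂ) z₁ + z₂ * (starRingEnd ℂ) z₂ - z₃ * (starRingEnd ℂ) z₃ - z₄ * (starRingEnd ℂ) z₄ := by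
    rw [hx]; push_cast; simp [Complex.mul_conj']
  subst hv hα hβ
  ext i j
  fin_cases i <;> fin_cases j <;>
    simp [Matrix.mul_apply, Fin.sum_univ_succ, Matrix.conjTranspose_apply, hx'] <;>
    ring_nf <;> linear_combination (1/2 : ℂ) * h'
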